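/- Fix an s×t matrix A over a finite alphabet Γ, and let à be its folding, of dimensions s'×t'. There exist constants c₁, k₁, c₂, k₂ > 0 (depending only on A) such that for every real ε ∈ (0,1] and every integer n ≥ c₁·ε^{-k₁}: every n×n matrix M over Γ that contains at least ε·n^{s'+t'} copies of à also contains at least c₂·ε^{k₂}·n^{s+t} copies of A. -/

import Mathlib

open Finset

/-- `(r, c)` is a copy of the `s × t` matrix `A` inside the `m × n` matrix `M`. -/
def IsCopy {Γ : Type*} {s t m n : ℕ} (A : Fin s → Fin t → Γ) (M : Fin m → Fin n → Γ)
    (r : Fin s → Fin m) (c : Fin t → Fin n) : Prop :=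
  StrictMono r ∧ StrictMono c ∧ ∀ i j, M (r i) (c j) = A i j

/-- The number of copies of `A` in `M`. -/
noncomputable def copyCount {Γ : Type*} {s t m n : ℕ} (A : Fin s → Fin t → Γ)
    (M : Fin m → Fin n → Γ) : ℕ :=
  Set.ncard {p : (Fin s → Fin m) × (Fin t → Fin n) | IsCopy A M p.1 p.2}

/-- The transpose of a matrix. -/
def transposeM {Γ : Type*} {a b : ℕ} (A : Fin a → Fin b → Γ) : Fin b → Fin a → Γ :=
  fun j i => A i j

/-- The rows of `A` that are kept when deleting every row equal to the row immediately
preceding it: a row is kept iff it has no predecessor, or differs from its predecessor. -/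
def keptRows {Γ : Type*} [DecidableEq Γ] {s t : ℕ} (A : Fin s → Fin t → Γ) : Finset (Fin s) :=
  univ.filter fun i => ∀ j : Fin s, (j : ℕ) + 1 = (i : ℕ) → A j ≠ A i

/-- The matrix obtained from `A` by deleting every row equal to its predecessor. -/
noncomputable def rowFold {Γ : Type*} [DecidableEq Γ] {s t : ℕ} (A : Fin s → Fin t → Γ) :
    Fin (keptRows A).card → Fin t → Γ :=
  fun i j => A ((keptRows A).orderIsoOfFin rfl i : Fin s) j

/-- The folding of `A`: first delete every row equal to its predecessor, then delete every
column (of the result) equal to its predecessor. -/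
noncomputable def fold {Γ : Type*} [DecidableEq Γ] {s t : ℕ} (A : Fin s → Fin t → Γ) :
    Fin (keptRows A).card → Fin (keptRows (transposeM (rowFold A))).card → Γ :=
  transposeM (rowFold (transposeM (rowFold A)))

instance decStrictMono {a m : ℕ} (r : Fin a → Fin m) : Decidable (StrictMono r) :=
  decidable_of_iff (∀ i j, i < j → r i < r j) Iff.rfl

instance decIsCopy {Γ : Type*} [DecidableEq Γ] {s t m n : ℕ} (A : Fin s → Fin t → Γ)
    (M : Fin m → Fin n → Γ) (r : Fin s → Fin m) (c : Fin t → Fin n) :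
    Decidable (IsCopy A M r c) :=
  decidable_of_iff (StrictMono r ∧ StrictMono c ∧ ∀ i j, M (r i) (c j) = A i j) Iff.rfl

lemma copyCount_eq_card {Γ : Type*} [DecidableEq Γ] {s t m n : ℕ} (A : Fin s → Fin t → Γ)
    (M : Fin m → Fin n → Γ) :
    copyCount A M
      = (univ.filter fun p : (Fin s → Fin m) × (Fin t → Fin n) => IsCopy A M p.1 p.2).card := by
  rw [copyCount, show {p : (Fin s → Fin m) × (Fin t → Fin n) | IsCopy A M p.1 p.2}
      = ↑(univ.filter fun p : (Fin s → Fin m) × (Fin t → Fin n) => IsCopy A M p.1 p.2) by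
    ext p; simp]
  exact Set.ncard_coe_finset _

/-- Copies with a fixed column tuple. -/
def Rset {Γ : Type*} [DecidableEq Γ] {s t m n : ℕ} (A : Fin s → Fin t → Γ)
    (M : Fin m → Fin n → Γ) (c : Fin t → Fin n) : Finset (Fin s → Fin m) :=
  univ.filter fun r => IsCopy A M r c

lemma copyCount_eq_sum {Γ : Type*} [DecidableEq Γ] {s t m n : ℕ} (A : Fin s → Fin t → Γ)
    (M : Fin m → Fin n → Γ) :
    copyCount A M = ∑ c : Fin t → Fin n, (Rset A M c).card := by
  rw [copyCount_eq_card]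
  rw [Finset.card_eq_sum_card_fiberwise (f := fun p => p.2) (t := univ)
    (fun x _ => mem_univ _)]
  refine Finset.sum_congr rfl fun c _ => ?_
  refine Finset.card_bij' (fun p _ => p.1) (fun r _ => (r, c)) ?_ ?_ ?_ ?_
  · intro p hp
    simp only [mem_filter, mem_univ, true_and] at hp ⊢
    obtain ⟨h1, h2⟩ := hp
    rw [Rset, mem_filter]
    exact ⟨mem_univ _, h2 ▸ h1⟩
  · intro r hr
    rw [Rset, mem_filter] at hr
    simp only [mem_filter, mem_univ, true_and]
    exact ⟨hr.2, trivial⟩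
  · intro p hp
    simp only [mem_filter, mem_univ, true_and] at hp
    exact Prod.ext rfl hp.2.symm
  · intro r hr; rfl

lemma copyCount_transpose {Γ : Type*} {a b m n : ℕ} (X : Fin a → Fin b → Γ)
    (M : Fin m → Fin n → Γ) :
    copyCount (transposeM X) (transposeM M) = copyCount X M := by
  rw [copyCount, copyCount]
  have h : {p : (Fin b → Fin n) × (Fin a → Fin m) | IsCopy (transposeM X) (transposeM M) p.1 p.2}
      = Prod.swap '' {p : (Fin a → Fin m) × (Fin b → Fin n) | IsCopy X M p.1 p.2} := by
    ext ⟨c, r⟩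
    simp only [Set.mem_setOf_eq, Set.mem_image, Prod.exists, Prod.swap_prod_mk,
      Prod.mk.injEq]
    constructor
    · rintro ⟨hc, hr, hcr⟩
      exact ⟨r, c, ⟨hr, hc, fun i j => hcr j i⟩, rfl, rfl⟩
    · rintro ⟨r', c', ⟨hr, hc, hcr⟩, rfl, rfl⟩
      exact ⟨hc, hr, fun i j => hcr j i⟩
  rw [h, Set.ncard_image_of_injective _ Prod.swap_injective]

/-- The set of strictly increasing tuples with prescribed memberships. -/
def Tset {n : ℕ} (k : ℕ) (A : Fin k → Finset (Fin n)) : Finset (Fin k → Fin n) :=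
  univ.filter fun r => StrictMono r ∧ ∀ i, r i ∈ A i

lemma Tset_card_le {n k : ℕ} (A : Fin k → Finset (Fin n)) :
    (Tset k A).card ≤ n ^ k := by
  calc (Tset k A).card ≤ (univ : Finset (Fin k → Fin n)).card := card_le_card (filter_subset _ _)
  _ = n ^ k := by simp [card_univ]

lemma Tset_mono {n k : ℕ} {A B : Fin k → Finset (Fin n)} (h : ∀ i, A i ⊆ B i) :
    Tset k A ⊆ Tset k B := by
  intro r hr
  rw [Tset, mem_filter] at hr ⊢
  exact ⟨hr.1, hr.2.1, fun i => h i (hr.2.2 i)⟩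

lemma ord_lemma {n : ℕ} : ∀ (k : ℕ) (A : Fin k → Finset (Fin n)) (δ : ℝ), 0 < δ →
    δ * (n : ℝ) ^ k ≤ ((Tset k A).card : ℝ) →
    ∃ D : Fin k → Finset (Fin n), (∀ i, D i ⊆ A i) ∧
      (∀ i j, i < j → ∀ x ∈ D i, ∀ y ∈ D j, x < y) ∧
      ∀ i, δ / 2 ^ k * n ≤ ((D i).card : ℝ) := by
  intro k
  induction k with
  | zero =>
    intro A δ hδ h
    exact ⟨fun i => i.elim0, fun i => i.elim0, fun i => i.elim0, fun i => i.elim0⟩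
  | succ k IH =>
    intro A δ hδ h
    rcases Nat.eq_zero_or_pos n with hn | hn
    · subst hn
      refine ⟨fun _ => ∅, fun i => empty_subset _, by simp, ?_⟩
      intro i; simp
    -- the prefix-count function
    set f : Fin n → ℕ := fun x =>
      (Tset k (fun i => A i.castSucc ∩ Iio x)).card with hf
    -- fiberwise count
    have hfiber : ∀ x : Fin n,
        ((Tset (k+1) A).filter (fun r => r (Fin.last k) = x)).card ≤ f x := by
      intro x
      apply Finset.card_le_card_of_injOn (fun r => fun i : Fin k => r i.castSucc)
      · intro r hr
        simp only [Finset.mem_coe, mem_filter, Tset, mem_univ, true_and] at hr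
        obtain ⟨⟨hmono, hmem⟩, hlast⟩ := hr
        simp only [Finset.mem_coe, Tset, mem_filter, mem_univ, true_and]
        refine ⟨hmono.comp Fin.strictMono_castSucc, fun i => ?_⟩
        rw [mem_inter, mem_Iio]
        exact ⟨hmem _, hlast ▸ hmono (Fin.castSucc_lt_last i)⟩
      · intro r₁ h₁ r₂ h₂ heq
        simp only [coe_filter, Set.mem_setOf_eq] at h₁ h₂
        funext i
        rcases Fin.eq_castSucc_or_eq_last i with ⟨j, rfl⟩ | rfl
        · exact congrFun heq j
        · rw [h₁.2, h₂.2]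
    have hnR : (0:ℝ) < (n:ℝ) := by exact_mod_cast hn
    have hpow : (0:ℝ) < (n:ℝ) ^ k := pow_pos hnR k
    -- total count is at most the sum of f over A (last)
    have h1 : ((Tset (k+1) A).card : ℝ) ≤ ∑ x ∈ A (Fin.last k), (f x : ℝ) := by
      have e1 : (Tset (k+1) A).card
          = ∑ x ∈ (univ : Finset (Fin n)),
            ((Tset (k+1) A).filter (fun r => r (Fin.last k) = x)).card :=
        Finset.card_eq_sum_card_fiberwise (fun r _ => mem_univ _)
      have e2 : ∑ x ∈ A (Fin.last k),
            ((Tset (k+1) A).filter (fun r => r (Fin.last k) = x)).card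
          = ∑ x ∈ (univ : Finset (Fin n)),
            ((Tset (k+1) A).filter (fun r => r (Fin.last k) = x)).card := by
        apply Finset.sum_subset (subset_univ _)
        intro x _ hx
        rw [Finset.card_eq_zero, Finset.filter_eq_empty_iff]
        intro r hr hcontra
        simp only [Tset, mem_filter, mem_univ, true_and] at hr
        exact hx (hcontra ▸ hr.2 (Fin.last k))
      rw [e1, ← e2]
      push_cast
      apply Finset.sum_le_sum
      intro x _
      exact_mod_cast hfiber x
    -- the set of good last rows
    set Dl : Finset (Fin n) :=
      (A (Fin.last k)).filter (fun x => δ / 2 * (n:ℝ) ^ k ≤ (f x : ℝ)) with hDl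
    have hfle : ∀ x : Fin n, (f x : ℝ) ≤ (n:ℝ) ^ k := by
      intro x
      exact_mod_cast Tset_card_le (fun i => A i.castSucc ∩ Iio x)
    have hDlcard : δ / 2 * (n:ℝ) ≤ (Dl.card : ℝ) := by
      have hsplit : ∑ x ∈ A (Fin.last k), (f x : ℝ)
          = ∑ x ∈ Dl, (f x : ℝ)
            + ∑ x ∈ (A (Fin.last k)).filter (fun x => ¬ (δ / 2 * (n:ℝ) ^ k ≤ (f x : ℝ))),
              (f x : ℝ) := (Finset.sum_filter_add_sum_filter_not _ _ _).symm
      have hb1 : ∑ x ∈ Dl, (f x : ℝ) ≤ (Dl.card : ℝ) * (n:ℝ) ^ k := by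
        calc ∑ x ∈ Dl, (f x : ℝ) ≤ ∑ _x ∈ Dl, (n:ℝ) ^ k :=
              Finset.sum_le_sum fun x _ => hfle x
        _ = (Dl.card : ℝ) * (n:ℝ) ^ k := by rw [Finset.sum_const, nsmul_eq_mul]
      have hb2 : ∑ x ∈ (A (Fin.last k)).filter (fun x => ¬ (δ / 2 * (n:ℝ) ^ k ≤ (f x : ℝ))),
            (f x : ℝ) ≤ (n:ℝ) * (δ / 2 * (n:ℝ) ^ k) := by
        calc _ ≤ ∑ _x ∈ (A (Fin.last k)).filter
                (fun x => ¬ (δ / 2 * (n:ℝ) ^ k ≤ (f x : ℝ))), (δ / 2 * (n:ℝ) ^ k) := by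
              apply Finset.sum_le_sum
              intro x hx
              exact le_of_lt (not_le.mp (mem_filter.mp hx).2)
        _ = (((A (Fin.last k)).filter _).card : ℝ) * (δ / 2 * (n:ℝ) ^ k) := by
              rw [Finset.sum_const, nsmul_eq_mul]
        _ ≤ (n:ℝ) * (δ / 2 * (n:ℝ) ^ k) := by
              apply mul_le_mul_of_nonneg_right _ (by positivity)
              have : ((A (Fin.last k)).filter
                  (fun x => ¬ (δ / 2 * (n:ℝ) ^ k ≤ (f x : ℝ)))).card ≤ n := by
                calc _ ≤ (univ : Finset (Fin n)).card :=
                      card_le_card (subset_univ _)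
                _ = n := by simp
              exact_mod_cast this
      have hstart : δ * (n:ℝ) ^ (k+1) ≤ ∑ x ∈ A (Fin.last k), (f x : ℝ) := le_trans h h1
      rw [hsplit] at hstart
      have : δ * (n:ℝ) ^ (k+1) ≤ (Dl.card : ℝ) * (n:ℝ) ^ k + (n:ℝ) * (δ / 2 * (n:ℝ) ^ k) := by
        linarith
      rw [pow_succ] at this
      nlinarith [hpow, hnR]
    have hDlne : Dl.Nonempty := by
      rw [← Finset.card_pos]
      have h0 : (0:ℝ) < (Dl.card : ℝ) := lt_of_lt_of_le (by positivity) hDlcard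
      exact_mod_cast h0
    set x₀ : Fin n := Dl.min' hDlne with hx₀
    have hx₀mem : x₀ ∈ Dl := Dl.min'_mem hDlne
    have hx₀f : δ / 2 * (n:ℝ) ^ k ≤ (f x₀ : ℝ) := (mem_filter.mp hx₀mem).2
    obtain ⟨D', hsub', hord', hcard'⟩ :=
      IH (fun i => A i.castSucc ∩ Iio x₀) (δ / 2) (by positivity) hx₀f
    refine ⟨fun i => if hi : i = Fin.last k then Dl else D' (i.castPred hi), ?_, ?_, ?_⟩
    · intro i
      by_cases hi : i = Fin.last k
      · subst hi
        simp only [dif_pos]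
        exact filter_subset _ _
      · simp only [dif_neg hi]
        intro x hx
        have := hsub' (i.castPred hi) hx
        rw [mem_inter] at this
        rw [← Fin.castSucc_castPred i hi]
        exact this.1
    · intro i j hij x hx y hy
      dsimp only at hx hy
      by_cases hj : j = Fin.last k
      · have hi : i ≠ Fin.last k := by
          intro hcon
          rw [hcon, hj] at hij
          exact lt_irrefl _ hij
        rw [dif_neg hi] at hx
        rw [dif_pos hj] at hy
        have hxlt : x < x₀ := by
          have := hsub' (i.castPred hi) hx
          rw [mem_inter, mem_Iio] at this
          exact this.2
        exact lt_of_lt_of_le hxlt (Dl.min'_le y hy)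
      · have hi : i ≠ Fin.last k := by
          intro hcon
          subst hcon
          exact hj (le_antisymm (Fin.le_last j) (le_of_lt hij))
        rw [dif_neg hi] at hx
        rw [dif_neg hj] at hy
        refine hord' _ _ ?_ x hx y hy
        rw [Fin.lt_def] at hij ⊢
        simpa using hij
    · intro i
      by_cases hi : i = Fin.last k
      · subst hi
        simp only [dif_pos]
        refine le_trans ?_ hDlcard
        apply mul_le_mul_of_nonneg_right _ (le_of_lt hnR)
        apply div_le_div_of_nonneg_left (le_of_lt hδ) (by norm_num)
        calc (2:ℝ) = 2 ^ 1 := (pow_one 2).symm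
        _ ≤ 2 ^ (k+1) := by
            apply pow_le_pow_right₀ (by norm_num)
            omega
      · simp only [dif_neg hi]
        refine le_trans (le_of_eq ?_) (hcard' (i.castPred hi))
        rw [pow_succ]
        ring

lemma chunk_lemma {n : ℕ} (E : Finset (Fin n)) (s q : ℕ) (h : s * q ≤ E.card) :
    ∃ D : Fin s → Finset (Fin n), (∀ a, D a ⊆ E) ∧ (∀ a, (D a).card = q) ∧
      (∀ a b, a < b → ∀ x ∈ D a, ∀ y ∈ D b, x < y) := by
  set e := E.orderIsoOfFin rfl with he
  have hidx : ∀ (a : Fin s) (i : Fin q), (a : ℕ) * q + (i : ℕ) < E.card := by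
    intro a i
    calc (a : ℕ) * q + (i : ℕ) < (a : ℕ) * q + q := by omega
    _ = ((a : ℕ) + 1) * q := by ring
    _ ≤ s * q := Nat.mul_le_mul_right q a.2
    _ ≤ E.card := h
  refine ⟨fun a => image (fun i : Fin q => (e ⟨(a:ℕ) * q + (i:ℕ), hidx a i⟩ : Fin n)) univ,
    ?_, ?_, ?_⟩
  · intro a x hx
    simp only [mem_image, mem_univ, true_and] at hx
    obtain ⟨i, rfl⟩ := hx
    exact (e _).2
  · intro a
    rw [Finset.card_image_of_injective _ ?_, card_univ, Fintype.card_fin]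
    intro i j hij
    have h2 : e ⟨(a:ℕ) * q + (i:ℕ), hidx a i⟩ = e ⟨(a:ℕ) * q + (j:ℕ), hidx a j⟩ :=
      Subtype.coe_injective hij
    have h3 := e.injective h2
    have h4 := congrArg Fin.val h3
    simp only at h4
    exact Fin.ext (by omega)
  · intro a b hab x hx y hy
    simp only [mem_image, mem_univ, true_and] at hx hy
    obtain ⟨i, rfl⟩ := hx
    obtain ⟨j, rfl⟩ := hy
    have hlt : ((a:ℕ) * q + (i:ℕ)) < ((b:ℕ) * q + (j:ℕ)) := by
      have hab' : (a:ℕ) + 1 ≤ (b:ℕ) := hab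
      have hi2 : (i:ℕ) < q := i.2
      calc (a:ℕ) * q + (i:ℕ) < (a:ℕ) * q + q := by omega
      _ = ((a:ℕ) + 1) * q := by ring
      _ ≤ (b:ℕ) * q := Nat.mul_le_mul_right q hab'
      _ ≤ (b:ℕ) * q + (j:ℕ) := Nat.le_add_right _ _
    have : e ⟨(a:ℕ) * q + (i:ℕ), hidx a i⟩ < e ⟨(b:ℕ) * q + (j:ℕ), hidx b j⟩ :=
      e.strictMono (by exact hlt)
    exact this

set_option maxHeartbeats 1600000 in
lemma exists_fold_map {Γ : Type*} [DecidableEq Γ] {s t : ℕ} (A : Fin s → Fin t → Γ) :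
    ∃ g : Fin s → Fin (keptRows A).card, Monotone g ∧
      ∀ j k, A j k = rowFold A (g j) k := by
  classical
  by_cases hs : s = 0
  · subst hs
    exact ⟨fun j => j.elim0, fun j => j.elim0, fun j => j.elim0⟩
  have hspos : 0 < s := Nat.pos_of_ne_zero hs
  have h0mem : (⟨0, hspos⟩ : Fin s) ∈ keptRows A := by
    rw [keptRows, mem_filter]
    refine ⟨mem_univ _, fun j hj => ?_⟩
    simp at hj
  have hKne : ∀ j : Fin s, ((keptRows A).filter (· ≤ j)).Nonempty := by
    intro j
    exact ⟨⟨0, hspos⟩, mem_filter.mpr ⟨h0mem, Fin.le_def.mpr (Nat.zero_le _)⟩⟩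
  set μ : Fin s → Fin s := fun j => ((keptRows A).filter (· ≤ j)).max' (hKne j) with hμ
  have hμmem : ∀ j, μ j ∈ keptRows A := fun j =>
    (mem_filter.mp (((keptRows A).filter (· ≤ j)).max'_mem (hKne j))).1
  have hμle : ∀ j, μ j ≤ j := fun j =>
    (mem_filter.mp (((keptRows A).filter (· ≤ j)).max'_mem (hKne j))).2
  have hμmono : Monotone μ := by
    intro j j' hjj'
    apply Finset.max'_subset
    intro x hx
    rw [mem_filter] at hx ⊢
    exact ⟨hx.1, le_trans hx.2 hjj'⟩
  -- main claim : A (μ j) = A j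
  have hμeq : ∀ m : ℕ, ∀ j : Fin s, (j : ℕ) = m → A (μ j) = A j := by
    intro m
    induction m with
    | zero =>
      intro j hj
      have hjmem : j ∈ keptRows A := by
        rw [keptRows, mem_filter]
        exact ⟨mem_univ _, fun j' hj' => absurd hj' (by omega)⟩
      have : μ j = j := le_antisymm (hμle j) (Finset.le_max' ((keptRows A).filter (· ≤ j)) j (mem_filter.mpr ⟨hjmem, le_refl j⟩))
      rw [this]
    | succ m IH =>
      intro j hj
      by_cases hjmem : j ∈ keptRows A
      · have : μ j = j :=
          le_antisymm (hμle j) (Finset.le_max' ((keptRows A).filter (· ≤ j)) j (mem_filter.mpr ⟨hjmem, le_refl j⟩))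
        rw [this]
      · rw [keptRows, mem_filter] at hjmem
        push_neg at hjmem
        obtain ⟨j', hj'1, hj'2⟩ := hjmem (mem_univ j)
        have hjj' : (j' : ℕ) = m := by omega
        have hKeq : (keptRows A).filter (· ≤ j) = (keptRows A).filter (· ≤ j') := by
          ext x
          rw [mem_filter, mem_filter]
          constructor
          · rintro ⟨hx1, hx2⟩
            refine ⟨hx1, ?_⟩
            have hxj : (x : ℕ) ≤ (j : ℕ) := hx2
            have hxne : x ≠ j := by
              rintro rfl
              rw [keptRows, mem_filter] at hx1
              exact hx1.2 j' hj'1 hj'2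
            have : (x : ℕ) < (j : ℕ) := lt_of_le_of_ne hxj (fun hc => hxne (Fin.ext hc))
            exact Fin.le_def.mpr (by omega)
          · rintro ⟨hx1, hx2⟩
            refine ⟨hx1, ?_⟩
            have : (x : ℕ) ≤ (j' : ℕ) := hx2
            exact Fin.le_def.mpr (by omega)
        have hμj : μ j = μ j' := by
          rw [hμ]
          simp only
          congr 1
        have := IH j' hjj'
        rw [hμj, this, hj'2]
  set e := (keptRows A).orderIsoOfFin rfl with he
  refine ⟨fun j => e.symm ⟨μ j, hμmem j⟩, ?_, ?_⟩
  · intro j j' hjj'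
    apply e.symm.monotone
    exact Subtype.mk_le_mk.mpr (hμmono hjj')
  · intro j k
    rw [rowFold]
    have : (e (e.symm ⟨μ j, hμmem j⟩) : Fin s) = μ j := by
      rw [OrderIso.apply_symm_apply]
    rw [this, hμeq (j : ℕ) j rfl]

lemma row_lemma {Γ : Type*} [DecidableEq Γ] {s s' t : ℕ}
    (B' : Fin s' → Fin t → Γ) (g : Fin s → Fin s') (hg : Monotone g) :
    ∃ C c : ℝ, ∃ K : ℕ, 0 < C ∧ 0 < c ∧ c ≤ 1 ∧ 0 < K ∧
      ∀ δ : ℝ, 0 < δ → δ ≤ 1 → ∀ n : ℕ, C / δ ≤ (n : ℝ) →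
        ∀ M : Fin n → Fin n → Γ,
          δ * (n:ℝ) ^ (s' + t) ≤ (copyCount B' M : ℝ) →
          c * δ ^ K * (n:ℝ) ^ (s + t)
            ≤ ((copyCount (fun j k => B' (g j) k) M : ℝ)) := by
  classical
  set Cb : ℝ := 2 ^ (s' + 2) * ((s:ℝ) + 1) with hCb
  have hCbpos : (0:ℝ) < Cb := by positivity
  have hCb1 : (1:ℝ) ≤ Cb := by
    rw [hCb]
    have h1 : (1:ℝ) ≤ 2 ^ (s' + 2) := one_le_pow₀ (by norm_num)
    nlinarith [h1]
  refine ⟨Cb, (1/2) * (1 / Cb) ^ s, s + 1, hCbpos, by positivity, ?_, Nat.succ_pos s, ?_⟩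
  · have h1 : (1 / Cb : ℝ) ≤ 1 := by
      rw [div_le_one hCbpos]; exact hCb1
    have h2 : ((1 / Cb : ℝ)) ^ s ≤ 1 := pow_le_one₀ (by positivity) h1
    nlinarith
  intro δ hδ hδ1 n hn M hM
  set B : Fin s → Fin t → Γ := fun j k => B' (g j) k with hB
  have hnC : Cb / δ ≤ (n:ℝ) := hn
  have hn1 : (1:ℝ) ≤ (n:ℝ) := by
    refine le_trans ?_ hn
    rw [le_div_iff₀ hδ]
    nlinarith
  have hnR : (0:ℝ) < (n:ℝ) := by linarith
  have hδn : Cb ≤ δ * n := by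
    rw [div_le_iff₀ hδ] at hn
    linarith [hn]
  -- count of copies with fixed columns
  have hTcle : ∀ c : Fin t → Fin n, ((Rset B' M c).card : ℝ) ≤ (n:ℝ) ^ s' := by
    intro c
    have : (Rset B' M c).card ≤ n ^ s' := by
      calc (Rset B' M c).card ≤ (univ : Finset (Fin s' → Fin n)).card :=
            card_le_card (filter_subset _ _)
      _ = n ^ s' := by simp [card_univ]
    exact_mod_cast this
  -- good columns
  set G : Finset (Fin t → Fin n) :=
    univ.filter (fun c => δ / 2 * (n:ℝ) ^ s' ≤ ((Rset B' M c).card : ℝ)) with hG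
  have hGcard : δ / 2 * (n:ℝ) ^ t ≤ (G.card : ℝ) := by
    have hsum : (copyCount B' M : ℝ) = ∑ c : Fin t → Fin n, ((Rset B' M c).card : ℝ) := by
      rw [copyCount_eq_sum]; push_cast; ring
    have hsplit : ∑ c : Fin t → Fin n, ((Rset B' M c).card : ℝ)
        = ∑ c ∈ G, ((Rset B' M c).card : ℝ)
          + ∑ c ∈ univ.filter (fun c => ¬ (δ / 2 * (n:ℝ) ^ s' ≤ ((Rset B' M c).card : ℝ))),
            ((Rset B' M c).card : ℝ) := by
      rw [hG]
      exact (Finset.sum_filter_add_sum_filter_not _ _ _).symm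
    have hb1 : ∑ c ∈ G, ((Rset B' M c).card : ℝ) ≤ (G.card : ℝ) * (n:ℝ) ^ s' := by
      calc _ ≤ ∑ _c ∈ G, (n:ℝ) ^ s' := Finset.sum_le_sum fun c _ => hTcle c
      _ = (G.card : ℝ) * (n:ℝ) ^ s' := by rw [Finset.sum_const, nsmul_eq_mul]
    have hb2 : ∑ c ∈ univ.filter (fun c => ¬ (δ / 2 * (n:ℝ) ^ s' ≤ ((Rset B' M c).card : ℝ))),
          ((Rset B' M c).card : ℝ) ≤ (n:ℝ) ^ t * (δ / 2 * (n:ℝ) ^ s') := by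
      calc _ ≤ ∑ _c ∈ univ.filter
            (fun c => ¬ (δ / 2 * (n:ℝ) ^ s' ≤ ((Rset B' M c).card : ℝ))),
            (δ / 2 * (n:ℝ) ^ s') := by
            apply Finset.sum_le_sum
            intro c hc
            exact le_of_lt (not_le.mp (mem_filter.mp hc).2)
      _ = ((univ.filter _).card : ℝ) * (δ / 2 * (n:ℝ) ^ s') := by
            rw [Finset.sum_const, nsmul_eq_mul]
      _ ≤ (n:ℝ) ^ t * (δ / 2 * (n:ℝ) ^ s') := by
            apply mul_le_mul_of_nonneg_right _ (by positivity)
            have : (univ.filter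
                (fun c => ¬ (δ / 2 * (n:ℝ) ^ s' ≤ ((Rset B' M c).card : ℝ)))).card
                ≤ n ^ t := by
              calc _ ≤ (univ : Finset (Fin t → Fin n)).card := card_le_card (filter_subset _ _)
              _ = n ^ t := by simp [card_univ]
            calc (_:ℝ) ≤ ((n ^ t : ℕ) : ℝ) := by exact_mod_cast this
            _ = (n:ℝ) ^ t := by push_cast; ring
    have hstart : δ * (n:ℝ) ^ (s' + t) ≤ (G.card : ℝ) * (n:ℝ) ^ s'
        + (n:ℝ) ^ t * (δ / 2 * (n:ℝ) ^ s') := by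
      rw [hsum, hsplit] at hM
      linarith
    rw [pow_add] at hstart
    have hps : (0:ℝ) < (n:ℝ) ^ s' := pow_pos hnR s'
    nlinarith [hps, pow_pos hnR t]
  -- chunk size
  set x : ℝ := δ * (n:ℝ) / (2 ^ (s' + 1) * (s + 1)) with hx
  have hxpos : 0 < x := by positivity
  have hx2 : (2:ℝ) ≤ x := by
    rw [hx]
    rw [le_div_iff₀ (by positivity)]
    calc (2:ℝ) * (2 ^ (s' + 1) * (s + 1)) = 2 ^ (s' + 2) * (s + 1) := by ring
    _ ≤ δ * n := hδn
  set q : ℕ := ⌊x⌋₊ with hq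
  have hqx : x - 1 < (q : ℝ) := Nat.sub_one_lt_floor x
  have hqge : x / 2 ≤ (q:ℝ) := by linarith
  have hqle : (q:ℝ) ≤ x := Nat.floor_le (le_of_lt hxpos)
  -- main per-column bound
  have key : ∀ c ∈ G, q ^ s ≤ (Rset B M c).card := by
    intro c hcG
    rw [hG, mem_filter] at hcG
    have hTc : δ / 2 * (n:ℝ) ^ s' ≤ ((Rset B' M c).card : ℝ) := hcG.2
    have hTcpos : 0 < (Rset B' M c).card := by
      have : (0:ℝ) < ((Rset B' M c).card : ℝ) :=
        lt_of_lt_of_le (by positivity) hTc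
      exact_mod_cast this
    obtain ⟨r₀, hr₀⟩ := Finset.card_pos.mp hTcpos
    have hcmono : StrictMono c := ((mem_filter.mp hr₀).2).2.1
    -- row classes
    set Ai : Fin s' → Finset (Fin n) :=
      fun i => univ.filter (fun y => ∀ k, M y (c k) = B' i k) with hAi
    have hRT : Rset B' M c = Tset s' Ai := by
      ext r
      rw [Rset, Tset, mem_filter, mem_filter]
      constructor
      · rintro ⟨hu, hr, hc, hval⟩
        exact ⟨hu, hr, fun i => by
          rw [hAi]; exact mem_filter.mpr ⟨mem_univ _, fun k => hval i k⟩⟩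
      · rintro ⟨hu, hr, hmem⟩
        refine ⟨hu, hr, hcmono, fun i k => ?_⟩
        have := hmem i
        rw [hAi, mem_filter] at this
        exact this.2 k
    obtain ⟨D, hDsub, hDord, hDcard⟩ := ord_lemma s' Ai (δ / 2) (by positivity)
      (by rw [← hRT]; exact hTc)
    have hDbig : ∀ i, δ / 2 ^ (s' + 1) * (n:ℝ) ≤ ((D i).card : ℝ) := by
      intro i
      refine le_trans (le_of_eq ?_) (hDcard i)
      rw [pow_succ]
      ring
    have hsq : ∀ i, s * q ≤ (D i).card := by
      intro i
      have h1 : ((s * q : ℕ) : ℝ) ≤ ((D i).card : ℝ) := by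
        push_cast
        calc (s:ℝ) * (q:ℝ) ≤ (s:ℝ) * x := by
              apply mul_le_mul_of_nonneg_left hqle (by positivity)
        _ ≤ ((s:ℝ) + 1) * x := by nlinarith [hxpos]
        _ = δ / 2 ^ (s' + 1) * (n:ℝ) := by
              rw [hx]
              field_simp
        _ ≤ ((D i).card : ℝ) := hDbig i
      exact_mod_cast h1
    choose E hE1 hE2 hE3 using fun i => chunk_lemma (D i) s q (hsq i)
    -- rank function
    set ρ : Fin s → Fin s := fun j =>
      ⟨(univ.filter (fun j' => j' < j ∧ g j' = g j)).card, by
        have hsub : univ.filter (fun j' => j' < j ∧ g j' = g j) ⊆ univ.erase j := by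
          intro j' hj'
          rw [mem_filter] at hj'
          exact mem_erase.mpr ⟨ne_of_lt hj'.2.1, mem_univ _⟩
        calc (univ.filter (fun j' => j' < j ∧ g j' = g j)).card
            ≤ (univ.erase j).card := card_le_card hsub
        _ = (univ : Finset (Fin s)).card - 1 := by rw [card_erase_of_mem (mem_univ _)]
        _ < s := by
            have h1 : (univ : Finset (Fin s)).card = s := by simp
            have h2 : 0 < s := j.pos
            rw [h1]
            omega⟩ with hρ
    have hρlt : ∀ j j' : Fin s, j < j' → g j = g j' → (ρ j : ℕ) < (ρ j' : ℕ) := by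
      intro j j' hjj' hgg
      have hss : univ.filter (fun j'' => j'' < j ∧ g j'' = g j)
          ⊂ univ.filter (fun j'' => j'' < j' ∧ g j'' = g j') := by
        rw [Finset.ssubset_iff_of_subset]
        · exact ⟨j, mem_filter.mpr ⟨mem_univ _, hjj', hgg⟩, by
            rw [mem_filter]
            push_neg
            intro _ hcon
            exact absurd hcon (lt_irrefl j)⟩
        · intro j'' hj''
          rw [mem_filter] at hj'' ⊢
          exact ⟨mem_univ _, lt_trans hj''.2.1 hjj', hj''.2.2.trans hgg⟩
      exact card_lt_card hss
    set Dfin : Fin s → Finset (Fin n) := fun j => E (g j) (ρ j) with hDfin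
    have hDfinord : ∀ j j' : Fin s, j < j' → ∀ y ∈ Dfin j, ∀ z ∈ Dfin j', y < z := by
      intro j j' hjj' y hy z hz
      rcases lt_or_eq_of_le (hg (le_of_lt hjj')) with hlt | heq
      · exact hDord (g j) (g j') hlt y (hE1 (g j) (ρ j) hy) z (hE1 (g j') (ρ j') hz)
      · rw [hDfin] at hy hz
        have hz2 : z ∈ E (g j) (ρ j') := by rw [heq]; exact hz
        exact hE3 (g j) (ρ j) (ρ j') (Fin.lt_def.mpr (hρlt j j' hjj' heq)) y hy z hz2
    have hbox : Fintype.piFinset Dfin ⊆ Rset B M c := by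
      intro r hr
      rw [Fintype.mem_piFinset] at hr
      rw [Rset, mem_filter]
      refine ⟨mem_univ _, ?_, hcmono, ?_⟩
      · intro j j' hjj'
        exact hDfinord j j' hjj' (r j) (hr j) (r j') (hr j')
      · intro j k
        have h1 : r j ∈ D (g j) := hE1 (g j) (ρ j) (hr j)
        have h2 := hDsub (g j) h1
        rw [hAi, mem_filter] at h2
        exact h2.2 k
    calc q ^ s = ∏ j : Fin s, (Dfin j).card := by
          rw [hDfin]
          simp only [hE2]
          rw [Finset.prod_const, card_univ, Fintype.card_fin]
    _ = (Fintype.piFinset Dfin).card := (Fintype.card_piFinset Dfin).symm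
    _ ≤ (Rset B M c).card := card_le_card hbox
  -- assemble
  have htotal : G.card * q ^ s ≤ copyCount B M := by
    rw [copyCount_eq_sum]
    calc G.card * q ^ s = ∑ _c ∈ G, q ^ s := by rw [Finset.sum_const, smul_eq_mul, mul_comm]
    _ ≤ ∑ c ∈ G, (Rset B M c).card := Finset.sum_le_sum key
    _ ≤ ∑ c : Fin t → Fin n, (Rset B M c).card :=
        Finset.sum_le_sum_of_subset (subset_univ G)
  have htotalR : (G.card : ℝ) * (q:ℝ) ^ s ≤ (copyCount B M : ℝ) := by
    exact_mod_cast htotal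
  have hfinal : (1 / 2) * (1 / Cb) ^ s * δ ^ (s + 1) * (n:ℝ) ^ (s + t)
      ≤ (G.card : ℝ) * (q:ℝ) ^ s := by
    have hxhalf : x / 2 = δ * (n:ℝ) / Cb := by
      rw [hx, hCb]
      field_simp
      ring
    have hlhs : (1 / 2) * (1 / Cb) ^ s * δ ^ (s + 1) * (n:ℝ) ^ (s + t)
        = (δ / 2 * (n:ℝ) ^ t) * (x / 2) ^ s := by
      rw [hxhalf, div_pow, div_pow, one_pow, pow_add, pow_succ]
      field_simp
      ring
    rw [hlhs]
    apply mul_le_mul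
    · exact hGcard
    · exact pow_le_pow_left₀ (by positivity) hqge s
    · positivity
    · positivity
  exact le_trans hfinal htotalR

/-- Fix an `s × t` matrix `A` over a finite alphabet `Γ`, with folding `Ã`
of dimensions `s' × t'`. There are constants `c₁, k₁, c₂, k₂ > 0` such that for every
`ε ∈ (0,1]` and every `n ≥ c₁·ε^{-k₁}`: every `n × n` matrix `M` over `Γ` containing at
least `ε·n^(s'+t')` copies of `Ã` contains at least `c₂·ε^(k₂)·n^(s+t)` copies of `A`. -/
theorem fold_removal {Γ : Type*} [Fintype Γ] [DecidableEq Γ] {s t : ℕ}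
    (A : Fin s → Fin t → Γ) :
    ∃ c₁ c₂ : ℝ, ∃ k₁ k₂ : ℕ, 0 < c₁ ∧ 0 < c₂ ∧ 0 < k₁ ∧ 0 < k₂ ∧
      ∀ ε : ℝ, 0 < ε → ε ≤ 1 → ∀ n : ℕ, c₁ / ε ^ k₁ ≤ (n : ℝ) →
        ∀ M : Fin n → Fin n → Γ,
          ε * (n : ℝ) ^ ((keptRows A).card + (keptRows (transposeM (rowFold A))).card) ≤
            (copyCount (fold A) M : ℝ) →
          c₂ * ε ^ k₂ * (n : ℝ) ^ (s + t) ≤ (copyCount A M : ℝ) := by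
  classical
  obtain ⟨g₁, hg₁, hfold₁⟩ := exists_fold_map (transposeM (rowFold A))
  obtain ⟨g₂, hg₂, hfold₂⟩ := exists_fold_map A
  obtain ⟨C₁, c₁', K₁, hC₁, hc₁, hc₁1, hK₁, H₁⟩ :=
    row_lemma (rowFold (transposeM (rowFold A))) g₁ hg₁
  obtain ⟨C₂, c₂', K₂, hC₂, hc₂, hc₂1, hK₂, H₂⟩ := row_lemma (rowFold A) g₂ hg₂
  refine ⟨C₁ + C₂ / c₁', c₂' * c₁' ^ K₂, K₁ + 1, K₁ * K₂, by positivity, by positivity,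
    Nat.succ_pos _, Nat.mul_pos hK₁ hK₂, ?_⟩
  intro ε hε hε1 n hn M hM
  have hεK : ∀ k₁ k₂ : ℕ, k₁ ≤ k₂ → ε ^ k₂ ≤ ε ^ k₁ :=
    fun k₁ k₂ h => pow_le_pow_of_le_one (le_of_lt hε) hε1 h
  have hεpow : ∀ k : ℕ, (0:ℝ) < ε ^ k := fun k => pow_pos hε k
  -- Step 1 : from fold A to rowFold A
  have h1n : C₁ / ε ≤ (n:ℝ) := by
    refine le_trans ?_ hn
    calc C₁ / ε ≤ C₁ / ε ^ (K₁ + 1) := by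
          apply div_le_div_of_nonneg_left (le_of_lt hC₁) (hεpow _)
          calc ε ^ (K₁ + 1) ≤ ε ^ 1 := hεK 1 (K₁ + 1) (by omega)
          _ = ε := pow_one ε
    _ ≤ (C₁ + C₂ / c₁') / ε ^ (K₁ + 1) := by
          gcongr
          have : (0:ℝ) ≤ C₂ / c₁' := by positivity
          linarith
  have hMcc : (copyCount (fold A) M : ℝ)
      = (copyCount (rowFold (transposeM (rowFold A))) (transposeM M) : ℝ) := by
    have h := copyCount_transpose (rowFold (transposeM (rowFold A))) (transposeM M)
    have h2 : copyCount (fold A) M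
        = copyCount (transposeM (rowFold (transposeM (rowFold A))))
            (transposeM (transposeM M)) := rfl
    rw [h2, h]
  have hM1 : ε * (n:ℝ) ^ ((keptRows (transposeM (rowFold A))).card + (keptRows A).card)
      ≤ (copyCount (rowFold (transposeM (rowFold A))) (transposeM M) : ℝ) := by
    rw [← hMcc, Nat.add_comm]
    exact hM
  have step1 := H₁ ε hε hε1 n h1n (transposeM M) hM1
  have hfun₁ : (fun j k => rowFold (transposeM (rowFold A)) (g₁ j) k)
      = transposeM (rowFold A) := by
    funext j k
    exact (hfold₁ j k).symm
  rw [hfun₁, copyCount_transpose (rowFold A) M] at step1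
  -- Step 2 : from rowFold A to A
  set δ' : ℝ := c₁' * ε ^ K₁ with hδ'
  have hδ'pos : 0 < δ' := by positivity
  have hδ'1 : δ' ≤ 1 := by
    have h1 : ε ^ K₁ ≤ 1 := pow_le_one₀ (le_of_lt hε) hε1
    nlinarith
  have h2n : C₂ / δ' ≤ (n:ℝ) := by
    refine le_trans ?_ hn
    rw [hδ']
    rw [div_le_div_iff₀ (by positivity) (hεpow _)]
    have hε2 : ε ^ (K₁ + 1) ≤ ε ^ K₁ := hεK K₁ (K₁ + 1) (by omega)
    have hc₂' : (0:ℝ) ≤ C₂ / c₁' := by positivity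
    calc C₂ * ε ^ (K₁ + 1) ≤ C₂ * ε ^ K₁ := by
          apply mul_le_mul_of_nonneg_left hε2 (le_of_lt hC₂)
    _ = (C₂ / c₁') * (c₁' * ε ^ K₁) := by
          field_simp
    _ ≤ (C₁ + C₂ / c₁') * (c₁' * ε ^ K₁) := by
          apply mul_le_mul_of_nonneg_right _ (by positivity)
          linarith
  have hM2 : δ' * (n:ℝ) ^ ((keptRows A).card + t) ≤ (copyCount (rowFold A) M : ℝ) := by
    refine le_trans (le_of_eq ?_) step1
    rw [Nat.add_comm]
  have step2 := H₂ δ' hδ'pos hδ'1 n h2n M hM2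
  have hfun₂ : (fun j k => rowFold A (g₂ j) k) = A := by
    funext j k
    exact (hfold₂ j k).symm
  rw [hfun₂] at step2
  refine le_trans (le_of_eq ?_) step2
  rw [hδ', mul_pow, ← pow_mul]
  ring
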